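/- Let L be a block matrix L = [[L_P, L_{PF}],[L_{PF}ᵀ, L_F]] with L_P ∈ ℝ^{m×m}, and input matrix B = [[e_1, 0],[0, I_{n-m}]]. If the pair (-L_P, e_1) is controllable, then the pair (-L, B) is controllable. -/

import Mathlib

open Matrix

/-- Kalman controllability matrix over an arbitrary finite index type. -/
def kalman' {ι κ : Type*} [Fintype ι] [DecidableEq ι] [Fintype κ]
    (M : Matrix ι ι ℝ) (B : Matrix ι κ ℝ) :
    Matrix ι (Fin (Fintype.card ι) × κ) ℝ :=
  Matrix.of fun i p => (M ^ (p.1 : ℕ) * B) i p.2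

/-- Full row rank iff the left kernel is trivial. -/
lemma rank_eq_card_iff_vecMul {ι κ : Type*} [Fintype ι] [Fintype κ]
    (A : Matrix ι κ ℝ) :
    A.rank = Fintype.card ι ↔ ∀ v : ι → ℝ, v ᵥ* A = 0 → v = 0 := by
  have hli : A.rank = Fintype.card ι ↔ LinearIndependent ℝ A.row := by
    rw [Matrix.rank_eq_finrank_span_row, linearIndependent_iff_card_eq_finrank_span,
      Set.finrank, eq_comm]
  rw [hli, ← Matrix.vecMul_injective_iff]
  constructor
  · intro h v hv
    have : v ᵥ* A = (0 : ι → ℝ) ᵥ* A := by rw [hv, Matrix.zero_vecMul]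
    exact h this
  · intro h v w hvw
    have hvw' : v ᵥ* A = w ᵥ* A := hvw
    have : (v - w) ᵥ* A = 0 := by
      rw [Matrix.sub_vecMul, hvw', sub_self]
    have := h _ this
    exact sub_eq_zero.mp this

/-- for a symmetric block matrix `L = [[L_P, L_PF],[L_PFᵀ, L_F]]`
and input matrix `B = [[e₁, 0],[0, I]]` (one input at node 1 of the first
block, independent inputs on every node of the second block), if `(-L_P, e₁)`
is controllable, then `(-L, B)` is controllable. -/
theorem block_controllable_of_path_block {m r : ℕ}
    (LP : Matrix (Fin m) (Fin m) ℝ) (hLP : LP.IsSymm)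
    (LPF : Matrix (Fin m) (Fin r) ℝ)
    (LF : Matrix (Fin r) (Fin r) ℝ) (hLF : LF.IsSymm)
    (e₁ : Matrix (Fin m) (Fin 1) ℝ)
    (he₁ : e₁ = Matrix.of fun (i : Fin m) (_ : Fin 1) => if (i : ℕ) = 0 then (1:ℝ) else 0)
    (hctrl : (kalman' (-LP) e₁).rank = m) :
    (kalman' (-(Matrix.fromBlocks LP LPF LPF.transpose LF))
        (Matrix.fromBlocks e₁ 0 0 (1 : Matrix (Fin r) (Fin r) ℝ))).rank = m + r := by
  classical
  set M : Matrix (Fin m ⊕ Fin r) (Fin m ⊕ Fin r) ℝ :=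
    -(Matrix.fromBlocks LP LPF LPF.transpose LF) with hM
  set B : Matrix (Fin m ⊕ Fin r) (Fin 1 ⊕ Fin r) ℝ :=
    Matrix.fromBlocks e₁ 0 0 (1 : Matrix (Fin r) (Fin r) ℝ) with hB
  have hcard : Fintype.card (Fin m ⊕ Fin r) = m + r := by simp
  rw [show m + r = Fintype.card (Fin m ⊕ Fin r) from hcard.symm]
  rw [rank_eq_card_iff_vecMul]
  intro v hv
  set x : Fin m → ℝ := v ∘ Sum.inl with hx'
  set y : Fin r → ℝ := v ∘ Sum.inr with hy'
  -- extract componentwise conditions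
  have key : ∀ k : ℕ, k < m + r → v ᵥ* (M ^ k * B) = 0 := by
    intro k hk
    funext c
    have := congrFun hv (⟨k, hcard ▸ hk⟩, c)
    simpa [kalman', Matrix.vecMul, dotProduct] using this
  rcases Nat.eq_zero_or_pos (m + r) with h0 | hpos
  · obtain ⟨hm, hr⟩ := Nat.add_eq_zero.mp h0
    funext i
    rcases i with i | i
    · exact absurd i.2 (by omega)
    · exact absurd i.2 (by omega)
  -- step 0 : y = 0
  have hy0 : y = 0 := by
    have h0 := key 0 hpos
    rw [pow_zero, Matrix.one_mul, hB, Matrix.vecMul_fromBlocks] at h0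
    have := congrFun h0
    funext j
    have hj := this (Sum.inr j)
    simpa [Matrix.vecMul_zero, Matrix.vecMul_one, hy'] using hj
  have hvxy : v = Sum.elim x 0 := by
    funext i
    rcases i with i | i
    · rfl
    · exact congrFun hy0 i
  -- main induction
  have claim : ∀ k : ℕ, k < m + r → v ᵥ* (M ^ k) = Sum.elim (x ᵥ* ((-LP) ^ k)) 0 := by
    intro k
    induction k with
    | zero =>
      intro _
      rw [pow_zero, pow_zero, Matrix.vecMul_one, Matrix.vecMul_one, hvxy]
    | succ k ih =>
      intro hk1
      have hk : k < m + r := Nat.lt_of_succ_lt hk1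
      have ihk := ih hk
      have step : v ᵥ* (M ^ (k + 1)) =
          Sum.elim (-(x ᵥ* ((-LP) ^ k) ᵥ* LP)) (-(x ᵥ* ((-LP) ^ k) ᵥ* LPF)) := by
        rw [pow_succ, ← Matrix.vecMul_vecMul, ihk, hM, Matrix.vecMul_neg,
          Matrix.vecMul_fromBlocks]
        simp only [Sum.elim_comp_inl, Sum.elim_comp_inr, Matrix.zero_vecMul, add_zero]
        funext i
        rcases i with i | i <;> simp
      -- the second-block condition kills the LPF part
      have hLPF0 : x ᵥ* ((-LP) ^ k) ᵥ* LPF = 0 := by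
        have hk1' := key (k + 1) hk1
        rw [← Matrix.vecMul_vecMul, step, hB, Matrix.vecMul_fromBlocks] at hk1'
        funext j
        have := congrFun hk1' (Sum.inr j)
        simp only [Sum.elim_comp_inl, Sum.elim_comp_inr, Matrix.vecMul_zero,
          Matrix.vecMul_one, Sum.elim_inr, zero_add, Pi.zero_apply] at this
        have : -(x ᵥ* (-LP) ^ k ᵥ* LPF) j = 0 := this
        simpa using this
      rw [step, hLPF0]
      have : -(x ᵥ* ((-LP) ^ k) ᵥ* LP) = x ᵥ* ((-LP) ^ (k + 1)) := by
        rw [pow_succ, ← Matrix.vecMul_vecMul, ← Matrix.vecMul_neg]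
      rw [this]
      funext i
      rcases i with i | i <;> simp
  -- conclude x = 0 from controllability of (-LP, e₁)
  have hx0 : x = 0 := by
    have hrank : (kalman' (-LP) e₁).rank = Fintype.card (Fin m) := by
      simpa using hctrl
    apply (rank_eq_card_iff_vecMul _).mp hrank
    funext p
    obtain ⟨k, c⟩ := p
    have hkm : (k : ℕ) < m := by simpa using k.2
    have hkmr : (k : ℕ) < m + r := by omega
    have hkey := key k hkmr
    rw [← Matrix.vecMul_vecMul, claim k hkmr, hB, Matrix.vecMul_fromBlocks] at hkey
    have := congrFun hkey (Sum.inl c)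
    simp only [Sum.elim_comp_inl, Sum.elim_comp_inr, Matrix.zero_vecMul,
      Matrix.vecMul_zero, add_zero, Sum.elim_inl, Pi.zero_apply] at this
    rw [Matrix.vecMul_vecMul] at this
    simpa [kalman', Matrix.vecMul, dotProduct] using this
  rw [hvxy, hx0]
  funext i
  rcases i with i | i <;> simp
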